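/- Assume ‖(A,B) − (Â,B̂)‖_op ≤ ε and ε ≤ (1−ρ)/(2 τ(A,ρ)) where ‖Aᵏ‖_op ≤ τ(A,ρ) ρᵏ for all k. Then ‖Σ_{k=0}^{t}(σ_w² Aᵏ(Aᵏ)ᵀ + σ_u² Aᵏ B Bᵀ (Aᵏ)ᵀ) − Σ_{k=0}^{t}(σ_w² Âᵏ(Âᵏ)ᵀ + σ_u² Âᵏ B̂ B̂ᵀ (Âᵏ)ᵀ)‖_op ≤ (8(σ_w² + σ_u² ‖B‖_op²) τ(A,ρ)³/(1−ρ²)² + 4 σ_u² ‖B‖_op τ(A,ρ)²/(1−ρ²)) ε + 2 σ_u² τ(A,ρ)² ε²/(1−ρ²), uniformly in t. -/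

import Mathlib

open Matrix

/-- The ℓ₂ → ℓ₂ operator (spectral) norm of a matrix. -/
noncomputable def opNorm {𝕜 : Type*} [RCLike 𝕜] {m n : Type*} [Fintype m] [Fintype n]
    [DecidableEq n] (M : Matrix m n 𝕜) : ℝ :=
  ‖(Matrix.toEuclideanLin M).toContinuousLinearMap‖

open scoped Matrix.Norms.L2Operator

lemma opNorm_eq_norm {𝕜 : Type*} [RCLike 𝕜] {m n : Type*} [Fintype m] [Fintype n]
    [DecidableEq n] (M : Matrix m n 𝕜) : opNorm M = ‖M‖ := rfl

lemma aux_norm_transpose {m n : Type*} [Fintype m] [Fintype n] [DecidableEq m] [DecidableEq n]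
    (M : Matrix m n ℝ) : ‖Mᵀ‖ = ‖M‖ := by
  have h : Mᴴ = Mᵀ := by ext i j; simp [Matrix.conjTranspose_apply]
  rw [← h, Matrix.l2_opNorm_conjTranspose]

lemma aux_norm_mul3 {l m n o : Type*} [Fintype l] [Fintype m] [Fintype n] [Fintype o]
    [DecidableEq m] [DecidableEq n] [DecidableEq o]
    (M : Matrix l m ℝ) (N : Matrix m n ℝ) (P : Matrix n o ℝ) {a b c : ℝ}
    (ha : ‖M‖ ≤ a) (hb : ‖N‖ ≤ b) (hc : ‖P‖ ≤ c) (ha0 : 0 ≤ a) (hb0 : 0 ≤ b) :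
    ‖M * N * P‖ ≤ a * b * c := by
  calc ‖M * N * P‖ ≤ ‖M * N‖ * ‖P‖ := Matrix.l2_opNorm_mul _ _
    _ ≤ (a * b) * c := by
        refine mul_le_mul (le_trans (Matrix.l2_opNorm_mul _ _) ?_) hc (norm_nonneg _)
          (mul_nonneg ha0 hb0)
        exact mul_le_mul ha hb (norm_nonneg _) ha0

lemma aux_norm_mul2 {l m n : Type*} [Fintype l] [Fintype m] [Fintype n]
    [DecidableEq m] [DecidableEq n]
    (M : Matrix l m ℝ) (N : Matrix m n ℝ) {a b : ℝ}
    (ha : ‖M‖ ≤ a) (hb : ‖N‖ ≤ b) (ha0 : 0 ≤ a) :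
    ‖M * N‖ ≤ a * b :=
  le_trans (Matrix.l2_opNorm_mul _ _) (mul_le_mul ha hb (norm_nonneg _) ha0)

/-- Norm of the identity matrix is at most 1. -/
lemma aux_norm_one_le {n : Type*} [Fintype n] [DecidableEq n] :
    ‖(1 : Matrix n n ℝ)‖ ≤ 1 := by
  have h : ‖(1 : Matrix n n ℝ)‖ = ‖(1 : EuclideanSpace ℝ n →L[ℝ] EuclideanSpace ℝ n)‖ := by
    rw [← Matrix.l2_opNorm_toEuclideanCLM, _root_.map_one]
  rw [h, ContinuousLinearMap.one_def]
  exact ContinuousLinearMap.norm_id_le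

lemma aux_norm_left_le {d p : ℕ} (X : Matrix (Fin d) (Fin d) ℝ) (Y : Matrix (Fin d) (Fin p) ℝ) :
    ‖X‖ ≤ ‖fromCols X Y‖ := by
  set E : Matrix (Fin d ⊕ Fin p) (Fin d) ℝ := fromRows 1 0 with hE
  have hE2 : Eᴴ * E = 1 := by
    rw [hE, conjTranspose_fromRows_eq_fromCols_conjTranspose, fromCols_mul_fromRows]
    simp
  have hsq : ‖E‖ * ‖E‖ ≤ 1 := by
    have h1 := Matrix.l2_opNorm_conjTranspose_mul_self E
    rw [hE2] at h1
    rw [← h1]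
    exact aux_norm_one_le
  have hEnorm : ‖E‖ ≤ 1 := by nlinarith [norm_nonneg E]
  have hXF : fromCols X Y * E = X := by
    rw [hE, fromCols_mul_fromRows]; simp
  calc ‖X‖ = ‖fromCols X Y * E‖ := by rw [hXF]
    _ ≤ ‖fromCols X Y‖ * ‖E‖ := Matrix.l2_opNorm_mul _ _
    _ ≤ ‖fromCols X Y‖ * 1 :=
        mul_le_mul_of_nonneg_left hEnorm (norm_nonneg _)
    _ = ‖fromCols X Y‖ := mul_one _

lemma aux_norm_right_le {d p : ℕ} (X : Matrix (Fin d) (Fin d) ℝ) (Y : Matrix (Fin d) (Fin p) ℝ) :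
    ‖Y‖ ≤ ‖fromCols X Y‖ := by
  set E : Matrix (Fin d ⊕ Fin p) (Fin p) ℝ := fromRows 0 1 with hE
  have hE2 : Eᴴ * E = 1 := by
    rw [hE, conjTranspose_fromRows_eq_fromCols_conjTranspose, fromCols_mul_fromRows]
    simp
  have hsq : ‖E‖ * ‖E‖ ≤ 1 := by
    have h1 := Matrix.l2_opNorm_conjTranspose_mul_self E
    rw [hE2] at h1
    rw [← h1]
    exact aux_norm_one_le
  have hEnorm : ‖E‖ ≤ 1 := by nlinarith [norm_nonneg E]
  have hXF : fromCols X Y * E = Y := by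
    rw [hE, fromCols_mul_fromRows]; simp
  calc ‖Y‖ = ‖fromCols X Y * E‖ := by rw [hXF]
    _ ≤ ‖fromCols X Y‖ * ‖E‖ := Matrix.l2_opNorm_mul _ _
    _ ≤ ‖fromCols X Y‖ * 1 :=
        mul_le_mul_of_nonneg_left hEnorm (norm_nonneg _)
    _ = ‖fromCols X Y‖ := mul_one _

/-- Telescoping identity for differences of matrix powers. -/
lemma aux_pow_sub_pow {d : ℕ} (X Y : Matrix (Fin d) (Fin d) ℝ) (k : ℕ) :
    X ^ k - Y ^ k = ∑ j ∈ Finset.range k, Y ^ j * (X - Y) * X ^ (k - 1 - j) := by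
  induction k with
  | zero => simp
  | succ m ih =>
    have h1 : X ^ (m + 1) - Y ^ (m + 1) = (X ^ m - Y ^ m) * X + Y ^ m * (X - Y) := by
      rw [pow_succ, pow_succ]; noncomm_ring
    rw [h1, ih, Finset.sum_mul, Finset.sum_range_succ]
    congr 1
    · refine Finset.sum_congr rfl fun j hj => ?_
      rw [Finset.mem_range] at hj
      have e : m - 1 - j + 1 = m + 1 - 1 - j := by omega
      rw [mul_assoc, ← pow_succ, e]
    · simp

lemma aux_geom_le {q : ℝ} (h0 : 0 ≤ q) (h1 : q < 1) (n : ℕ) :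
    ∑ k ∈ Finset.range n, q ^ k ≤ 1 / (1 - q) := by
  have h : 0 < 1 - q := by linarith
  rw [le_div_iff₀ h]
  have hg := geom_sum_mul q n
  have h2 : (∑ k ∈ Finset.range n, q ^ k) * (1 - q) = 1 - q ^ n := by linear_combination -hg
  have h3 : 0 ≤ q ^ n := pow_nonneg h0 n
  linarith

lemma aux_geom_deriv_le {q : ℝ} (h0 : 0 ≤ q) (h1 : q < 1) (n : ℕ) :
    ∑ k ∈ Finset.range n, ((k : ℝ) + 1) * q ^ k ≤ 1 / (1 - q) ^ 2 := by
  have h : 0 < 1 - q := by linarith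
  have key : ∀ m : ℕ, (1 - q) ^ 2 * ∑ k ∈ Finset.range m, ((k : ℝ) + 1) * q ^ k
      = 1 - ((m : ℝ) + 1) * q ^ m + (m : ℝ) * q ^ (m + 1) := by
    intro m
    induction m with
    | zero => simp
    | succ j ihm =>
      rw [Finset.sum_range_succ, mul_add, ihm]
      push_cast
      rw [pow_succ q (j + 1), pow_succ q j]
      ring
  rw [le_div_iff₀ (by positivity)]
  have h2 : (∑ k ∈ Finset.range n, ((k : ℝ) + 1) * q ^ k) * (1 - q) ^ 2
      = 1 - ((n : ℝ) + 1) * q ^ n + (n : ℝ) * q ^ (n + 1) := by linear_combination key n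
  have h3 : q ^ (n + 1) ≤ q ^ n := pow_le_pow_of_le_one h0 h1.le (by omega)
  have h4 : (n : ℝ) * q ^ (n + 1) ≤ (n : ℝ) * q ^ n :=
    mul_le_mul_of_nonneg_left h3 (Nat.cast_nonneg n)
  have h5 : 0 ≤ q ^ n := pow_nonneg h0 n
  linarith

set_option maxHeartbeats 2000000 in
/-- perturbation bound for finite-horizon noise Gramians. If
`‖(A,B) − (Â,B̂)‖_op ≤ ε ≤ (1−ρ)/(2τ)` where `‖Aᵏ‖_op ≤ τ ρᵏ` for all `k`, then uniformly
in `t`, the operator-norm difference of the Gramians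
`Σ_{k=0}^t (σ_w² Aᵏ(Aᵏ)ᵀ + σ_u² Aᵏ B Bᵀ (Aᵏ)ᵀ)` of the two systems is at most
`(8(σ_w² + σ_u²‖B‖²)τ³/(1−ρ²)² + 4σ_u²‖B‖τ²/(1−ρ²)) ε + 2σ_u²τ²ε²/(1−ρ²)`. -/
theorem gramian_perturbation {d p : ℕ}
    (A Ahat : Matrix (Fin d) (Fin d) ℝ) (B Bhat : Matrix (Fin d) (Fin p) ℝ)
    (σw σu τ ρ ε : ℝ) (hσw : 0 ≤ σw) (hσu : 0 ≤ σu)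
    (hρ0 : 0 < ρ) (hρ1 : ρ < 1) (hτ : 0 < τ)
    (hA : ∀ k : ℕ, opNorm (A ^ k) ≤ τ * ρ ^ k)
    (hpert : opNorm (Matrix.fromCols A B - Matrix.fromCols Ahat Bhat) ≤ ε)
    (hεsmall : ε ≤ (1 - ρ) / (2 * τ)) :
    ∀ t : ℕ,
      opNorm
        ((∑ k ∈ Finset.range (t + 1),
            (σw ^ 2 • (A ^ k * (A ^ k)ᵀ) + σu ^ 2 • (A ^ k * B * Bᵀ * (A ^ k)ᵀ)))
          - ∑ k ∈ Finset.range (t + 1),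
            (σw ^ 2 • (Ahat ^ k * (Ahat ^ k)ᵀ) + σu ^ 2 • (Ahat ^ k * Bhat * Bhatᵀ * (Ahat ^ k)ᵀ)))
        ≤ (8 * (σw ^ 2 + σu ^ 2 * (opNorm B) ^ 2) * τ ^ 3 / (1 - ρ ^ 2) ^ 2
            + 4 * σu ^ 2 * opNorm B * τ ^ 2 / (1 - ρ ^ 2)) * ε
          + 2 * σu ^ 2 * τ ^ 2 * ε ^ 2 / (1 - ρ ^ 2) := by
  intro t
  simp only [opNorm_eq_norm] at hA hpert ⊢
  -- basic facts
  have hε0 : 0 ≤ ε := le_trans (norm_nonneg _) hpert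
  have hτε : τ * ε ≤ (1 - ρ) / 2 := by
    have h1 : τ * ε ≤ τ * ((1 - ρ) / (2 * τ)) := mul_le_mul_of_nonneg_left hεsmall hτ.le
    have h2 : τ * ((1 - ρ) / (2 * τ)) = (1 - ρ) / 2 := by field_simp
    linarith
  obtain ⟨s, hs⟩ : ∃ s : ℝ, s = ρ + τ * ε := ⟨_, rfl⟩
  have hτε0 : 0 ≤ τ * ε := mul_nonneg hτ.le hε0
  have hρs : ρ ≤ s := by rw [hs]; linarith
  have hs0 : 0 < s := lt_of_lt_of_le hρ0 hρs
  have hshalf : s ≤ (1 + ρ) / 2 := by rw [hs]; linarith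
  have hs1 : s < 1 := lt_of_le_of_lt hshalf (by linarith)
  have hsr : s - ρ = τ * ε := by rw [hs]; ring
  -- extract component bounds
  have hFd : Matrix.fromCols A B - Matrix.fromCols Ahat Bhat
      = Matrix.fromCols (A - Ahat) (B - Bhat) := by
    ext i j
    cases j with
    | inl j => simp [Matrix.fromCols]
    | inr j => simp [Matrix.fromCols]
  rw [hFd] at hpert
  have hAd : ‖A - Ahat‖ ≤ ε := le_trans (aux_norm_left_le _ _) hpert
  have hBd : ‖B - Bhat‖ ≤ ε := le_trans (aux_norm_right_le _ _) hpert
  -- powers of Ahat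
  have hAs : ∀ k : ℕ, ‖A ^ k‖ ≤ τ * s ^ k := fun k =>
    le_trans (hA k) (mul_le_mul_of_nonneg_left (pow_le_pow_left₀ hρ0.le hρs k) hτ.le)
  have hAhatk : ∀ k : ℕ, ‖Ahat ^ k‖ ≤ τ * s ^ k := by
    intro k
    induction k using Nat.strong_induction_on with
    | _ k ih =>
      have hD : ‖A ^ k - Ahat ^ k‖
          ≤ ∑ j ∈ Finset.range k, τ * s ^ j * ε * (τ * ρ ^ (k - 1 - j)) := by
        rw [aux_pow_sub_pow]
        refine le_trans (norm_sum_le _ _) (Finset.sum_le_sum fun j hj => ?_)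
        rw [Finset.mem_range] at hj
        exact aux_norm_mul3 _ _ _ (ih j hj) hAd (hA _)
          (mul_nonneg hτ.le (pow_nonneg hs0.le _)) hε0
      have hsum : ∑ j ∈ Finset.range k, τ * s ^ j * ε * (τ * ρ ^ (k - 1 - j))
          = τ * (s ^ k - ρ ^ k) := by
        have hg := geom_sum₂_mul s ρ k
        calc ∑ j ∈ Finset.range k, τ * s ^ j * ε * (τ * ρ ^ (k - 1 - j))
            = τ * ((∑ j ∈ Finset.range k, s ^ j * ρ ^ (k - 1 - j)) * (s - ρ)) := by
              rw [hsr, Finset.sum_mul, Finset.mul_sum]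
              exact Finset.sum_congr rfl fun j _ => by ring
          _ = τ * (s ^ k - ρ ^ k) := by rw [hg]
      calc ‖Ahat ^ k‖ = ‖A ^ k - (A ^ k - Ahat ^ k)‖ := by rw [sub_sub_cancel]
        _ ≤ ‖A ^ k‖ + ‖A ^ k - Ahat ^ k‖ := norm_sub_le _ _
        _ ≤ τ * ρ ^ k + τ * (s ^ k - ρ ^ k) := add_le_add (hA k) (hsum ▸ hD)
        _ = τ * s ^ k := by ring
  -- power difference bound
  have hDk : ∀ k : ℕ, ‖A ^ (k + 1) - Ahat ^ (k + 1)‖ ≤ ε * τ ^ 2 * ((k : ℝ) + 1) * s ^ k := by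
    intro k
    rw [aux_pow_sub_pow]
    have hbound : ∀ j ∈ Finset.range (k + 1),
        ‖Ahat ^ j * (A - Ahat) * A ^ (k + 1 - 1 - j)‖ ≤ ε * τ ^ 2 * s ^ k := by
      intro j hj
      rw [Finset.mem_range] at hj
      have h1 : ‖Ahat ^ j * (A - Ahat) * A ^ (k + 1 - 1 - j)‖
          ≤ τ * s ^ j * ε * (τ * s ^ (k + 1 - 1 - j)) :=
        aux_norm_mul3 _ _ _ (hAhatk j) hAd (hAs _)
          (mul_nonneg hτ.le (pow_nonneg hs0.le _)) hε0
      have e1 : k + 1 - 1 - j = k - j := by omega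
      have e2 : s ^ j * s ^ (k - j) = s ^ k := by
        rw [← pow_add]; congr 1; omega
      calc ‖Ahat ^ j * (A - Ahat) * A ^ (k + 1 - 1 - j)‖
          ≤ τ * s ^ j * ε * (τ * s ^ (k + 1 - 1 - j)) := h1
        _ = ε * τ ^ 2 * (s ^ j * s ^ (k - j)) := by rw [e1]; ring
        _ = ε * τ ^ 2 * s ^ k := by rw [e2]
    refine le_trans (norm_sum_le _ _) (le_trans (Finset.sum_le_sum hbound) ?_)
    rw [Finset.sum_const, Finset.card_range, nsmul_eq_mul]
    push_cast
    apply le_of_eq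
    ring
  -- B bounds
  have hBhat : ‖Bhat‖ ≤ ‖B‖ + ε := by
    calc ‖Bhat‖ = ‖B - (B - Bhat)‖ := by rw [sub_sub_cancel]
      _ ≤ ‖B‖ + ‖B - Bhat‖ := norm_sub_le _ _
      _ ≤ ‖B‖ + ε := by linarith
  have hBB : ‖B * Bᵀ - Bhat * Bhatᵀ‖ ≤ ε * (2 * ‖B‖ + ε) := by
    have hid : B * Bᵀ - Bhat * Bhatᵀ = (B - Bhat) * Bᵀ + Bhat * (Bᵀ - Bhatᵀ) := by
      simp only [Matrix.sub_mul, Matrix.mul_sub]; abel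
    rw [hid]
    have h1 : ‖(B - Bhat) * Bᵀ‖ ≤ ε * ‖B‖ :=
      aux_norm_mul2 _ _ hBd (le_of_eq (aux_norm_transpose B)) hε0
    have hBt : ‖Bᵀ - Bhatᵀ‖ ≤ ε := by
      rw [← Matrix.transpose_sub, aux_norm_transpose]; exact hBd
    have h2 : ‖Bhat * (Bᵀ - Bhatᵀ)‖ ≤ (‖B‖ + ε) * ε :=
      aux_norm_mul2 _ _ hBhat hBt (by positivity)
    calc ‖(B - Bhat) * Bᵀ + Bhat * (Bᵀ - Bhatᵀ)‖
        ≤ ‖(B - Bhat) * Bᵀ‖ + ‖Bhat * (Bᵀ - Bhatᵀ)‖ := norm_add_le _ _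
      _ ≤ ε * ‖B‖ + (‖B‖ + ε) * ε := add_le_add h1 h2
      _ = ε * (2 * ‖B‖ + ε) := by ring
  -- per-term bound
  have hterm : ∀ k : ℕ,
      ‖(σw ^ 2 • (A ^ k * (A ^ k)ᵀ) + σu ^ 2 • (A ^ k * B * Bᵀ * (A ^ k)ᵀ))
        - (σw ^ 2 • (Ahat ^ k * (Ahat ^ k)ᵀ) + σu ^ 2 • (Ahat ^ k * Bhat * Bhatᵀ * (Ahat ^ k)ᵀ))‖
      ≤ 2 * τ * (σw ^ 2 + σu ^ 2 * ‖B‖ ^ 2) * (‖A ^ k - Ahat ^ k‖ * s ^ k)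
        + σu ^ 2 * τ ^ 2 * (2 * ‖B‖ + ε) * ε * (s ^ 2) ^ k := by
    intro k
    set X := A ^ k with hX
    set Y := Ahat ^ k with hY
    have hXn : ‖X‖ ≤ τ * s ^ k := hAs k
    have hYn : ‖Y‖ ≤ τ * s ^ k := hAhatk k
    have hXtn : ‖Xᵀ‖ ≤ τ * s ^ k := (aux_norm_transpose X).trans_le hXn
    have hYtn : ‖Yᵀ‖ ≤ τ * s ^ k := (aux_norm_transpose Y).trans_le hYn
    have hDtn : ‖Xᵀ - Yᵀ‖ = ‖X - Y‖ := by
      rw [← Matrix.transpose_sub, aux_norm_transpose]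
    have hτs : 0 ≤ τ * s ^ k := mul_nonneg hτ.le (pow_nonneg hs0.le _)
    have hBn2 : ‖B * Bᵀ‖ ≤ ‖B‖ * ‖B‖ :=
      aux_norm_mul2 _ _ le_rfl (le_of_eq (aux_norm_transpose B)) (norm_nonneg _)
    have hdec : (σw ^ 2 • (X * Xᵀ) + σu ^ 2 • (X * B * Bᵀ * Xᵀ))
        - (σw ^ 2 • (Y * Yᵀ) + σu ^ 2 • (Y * Bhat * Bhatᵀ * Yᵀ))
        = σw ^ 2 • (X * Xᵀ - Y * Yᵀ)
          + σu ^ 2 • (X * B * Bᵀ * Xᵀ - Y * Bhat * Bhatᵀ * Yᵀ) := by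
      rw [smul_sub, smul_sub]; abel
    rw [hdec]
    have hid1 : X * Xᵀ - Y * Yᵀ = (X - Y) * Xᵀ + Y * (Xᵀ - Yᵀ) := by noncomm_ring
    have hn1 : ‖X * Xᵀ - Y * Yᵀ‖ ≤ ‖X - Y‖ * (τ * s ^ k) + (τ * s ^ k) * ‖X - Y‖ := by
      rw [hid1]
      refine le_trans (norm_add_le _ _) (add_le_add ?_ ?_)
      · exact aux_norm_mul2 _ _ le_rfl hXtn (norm_nonneg _)
      · exact aux_norm_mul2 _ _ hYn (le_of_eq hDtn) hτs
    have hid2 : X * B * Bᵀ * Xᵀ - Y * Bhat * Bhatᵀ * Yᵀ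
        = (X - Y) * (B * Bᵀ) * Xᵀ + Y * (B * Bᵀ) * (Xᵀ - Yᵀ)
          + Y * (B * Bᵀ - Bhat * Bhatᵀ) * Yᵀ := by
      simp only [Matrix.sub_mul, Matrix.mul_sub, Matrix.mul_assoc]; abel
    have hn2 : ‖X * B * Bᵀ * Xᵀ - Y * Bhat * Bhatᵀ * Yᵀ‖
        ≤ ‖X - Y‖ * (‖B‖ * ‖B‖) * (τ * s ^ k) + (τ * s ^ k) * (‖B‖ * ‖B‖) * ‖X - Y‖
          + (τ * s ^ k) * (ε * (2 * ‖B‖ + ε)) * (τ * s ^ k) := by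
      rw [hid2]
      refine le_trans (norm_add_le _ _) (add_le_add (le_trans (norm_add_le _ _)
        (add_le_add ?_ ?_)) ?_)
      · exact aux_norm_mul3 _ _ _ le_rfl hBn2 hXtn (norm_nonneg _)
          (mul_nonneg (norm_nonneg _) (norm_nonneg _))
      · exact aux_norm_mul3 _ _ _ hYn hBn2 (le_of_eq hDtn) hτs
          (mul_nonneg (norm_nonneg _) (norm_nonneg _))
      · exact aux_norm_mul3 _ _ _ hYn hBB hYtn hτs
          (mul_nonneg hε0 (by positivity))
    have hnsm1 : ‖σw ^ 2 • (X * Xᵀ - Y * Yᵀ)‖ = σw ^ 2 * ‖X * Xᵀ - Y * Yᵀ‖ := by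
      rw [norm_smul, Real.norm_eq_abs, abs_of_nonneg (sq_nonneg _)]
    have hnsm2 : ‖σu ^ 2 • (X * B * Bᵀ * Xᵀ - Y * Bhat * Bhatᵀ * Yᵀ)‖
        = σu ^ 2 * ‖X * B * Bᵀ * Xᵀ - Y * Bhat * Bhatᵀ * Yᵀ‖ := by
      rw [norm_smul, Real.norm_eq_abs, abs_of_nonneg (sq_nonneg _)]
    have hq : (s ^ 2) ^ k = s ^ k * s ^ k := by rw [sq, mul_pow]
    calc ‖σw ^ 2 • (X * Xᵀ - Y * Yᵀ)
          + σu ^ 2 • (X * B * Bᵀ * Xᵀ - Y * Bhat * Bhatᵀ * Yᵀ)‖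
        ≤ σw ^ 2 * ‖X * Xᵀ - Y * Yᵀ‖
          + σu ^ 2 * ‖X * B * Bᵀ * Xᵀ - Y * Bhat * Bhatᵀ * Yᵀ‖ := by
          refine le_trans (norm_add_le _ _) ?_
          rw [hnsm1, hnsm2]
      _ ≤ σw ^ 2 * (‖X - Y‖ * (τ * s ^ k) + (τ * s ^ k) * ‖X - Y‖)
          + σu ^ 2 * (‖X - Y‖ * (‖B‖ * ‖B‖) * (τ * s ^ k)
            + (τ * s ^ k) * (‖B‖ * ‖B‖) * ‖X - Y‖
            + (τ * s ^ k) * (ε * (2 * ‖B‖ + ε)) * (τ * s ^ k)) :=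
          add_le_add (mul_le_mul_of_nonneg_left hn1 (sq_nonneg _))
            (mul_le_mul_of_nonneg_left hn2 (sq_nonneg _))
      _ = 2 * τ * (σw ^ 2 + σu ^ 2 * ‖B‖ ^ 2) * (‖X - Y‖ * s ^ k)
          + σu ^ 2 * τ ^ 2 * (2 * ‖B‖ + ε) * ε * (s ^ 2) ^ k := by
          rw [hq]; ring
  -- assemble
  have hq0 : 0 ≤ s ^ 2 := sq_nonneg s
  have hq1 : s ^ 2 < 1 := by nlinarith [mul_lt_mul_of_pos_left hs1 hs0]
  have hu : 0 < 1 - ρ ^ 2 := by nlinarith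
  have h1q : (1 - ρ ^ 2) / 2 ≤ 1 - s ^ 2 := by
    nlinarith [mul_self_le_mul_self hs0.le hshalf, sq_nonneg (1 - ρ)]
  have h1q0 : 0 < 1 - s ^ 2 := by linarith
  have hG1 : ∑ k ∈ Finset.range (t + 1), (s ^ 2) ^ k ≤ 1 / (1 - s ^ 2) := aux_geom_le hq0 hq1 _
  have hG2 : ∑ k ∈ Finset.range t, ((k : ℝ) + 1) * (s ^ 2) ^ k ≤ 1 / (1 - s ^ 2) ^ 2 :=
    aux_geom_deriv_le hq0 hq1 _
  have hDsum : ∑ k ∈ Finset.range (t + 1), ‖A ^ k - Ahat ^ k‖ * s ^ k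
      ≤ ε * τ ^ 2 * (1 / (1 - s ^ 2) ^ 2) := by
    rw [Finset.sum_range_succ']
    have hf0 : ‖A ^ 0 - Ahat ^ 0‖ * s ^ 0 = 0 := by simp
    rw [hf0, add_zero]
    have hstep : ∀ k ∈ Finset.range t,
        ‖A ^ (k + 1) - Ahat ^ (k + 1)‖ * s ^ (k + 1)
          ≤ ε * τ ^ 2 * (((k : ℝ) + 1) * (s ^ 2) ^ k) := by
      intro k _
      have e : s ^ k * s ^ (k + 1) = (s ^ 2) ^ k * s := by
        rw [← pow_mul, ← pow_add, ← pow_succ]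
        congr 1
        omega
      have h2 : ‖A ^ (k + 1) - Ahat ^ (k + 1)‖ * s ^ (k + 1)
          ≤ ε * τ ^ 2 * ((k : ℝ) + 1) * s ^ k * s ^ (k + 1) :=
        mul_le_mul_of_nonneg_right (hDk k) (by positivity)
      have h3 : ε * τ ^ 2 * ((k : ℝ) + 1) * s ^ k * s ^ (k + 1)
          = (ε * τ ^ 2 * (((k : ℝ) + 1) * (s ^ 2) ^ k)) * s := by
        linear_combination (ε * τ ^ 2 * ((k : ℝ) + 1)) * e
      rw [h3] at h2
      exact h2.trans (mul_le_of_le_one_right (by positivity) hs1.le)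
    calc ∑ k ∈ Finset.range t, ‖A ^ (k + 1) - Ahat ^ (k + 1)‖ * s ^ (k + 1)
        ≤ ∑ k ∈ Finset.range t, ε * τ ^ 2 * (((k : ℝ) + 1) * (s ^ 2) ^ k) :=
          Finset.sum_le_sum hstep
      _ = ε * τ ^ 2 * ∑ k ∈ Finset.range t, ((k : ℝ) + 1) * (s ^ 2) ^ k := by
          rw [Finset.mul_sum]
      _ ≤ ε * τ ^ 2 * (1 / (1 - s ^ 2) ^ 2) :=
          mul_le_mul_of_nonneg_left hG2 (by positivity)
  have hC1 : (0 : ℝ) ≤ 2 * τ * (σw ^ 2 + σu ^ 2 * ‖B‖ ^ 2) := by positivity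
  have hC2 : (0 : ℝ) ≤ σu ^ 2 * τ ^ 2 * (2 * ‖B‖ + ε) * ε := by positivity
  have hX1 : 1 / (1 - s ^ 2) ^ 2 ≤ 4 / (1 - ρ ^ 2) ^ 2 := by
    rw [div_le_div_iff₀ (by positivity) (by positivity)]
    nlinarith [mul_self_le_mul_self (by linarith : (0 : ℝ) ≤ (1 - ρ ^ 2) / 2) h1q]
  have hX2 : 1 / (1 - s ^ 2) ≤ 2 / (1 - ρ ^ 2) := by
    rw [div_le_div_iff₀ h1q0 hu]
    linarith
  rw [← Finset.sum_sub_distrib]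
  refine le_trans (norm_sum_le _ _) ?_
  calc ∑ k ∈ Finset.range (t + 1),
        ‖(σw ^ 2 • (A ^ k * (A ^ k)ᵀ) + σu ^ 2 • (A ^ k * B * Bᵀ * (A ^ k)ᵀ))
          - (σw ^ 2 • (Ahat ^ k * (Ahat ^ k)ᵀ)
            + σu ^ 2 • (Ahat ^ k * Bhat * Bhatᵀ * (Ahat ^ k)ᵀ))‖
      ≤ ∑ k ∈ Finset.range (t + 1),
          (2 * τ * (σw ^ 2 + σu ^ 2 * ‖B‖ ^ 2) * (‖A ^ k - Ahat ^ k‖ * s ^ k)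
            + σu ^ 2 * τ ^ 2 * (2 * ‖B‖ + ε) * ε * (s ^ 2) ^ k) :=
        Finset.sum_le_sum fun k _ => hterm k
    _ = 2 * τ * (σw ^ 2 + σu ^ 2 * ‖B‖ ^ 2)
          * ∑ k ∈ Finset.range (t + 1), ‖A ^ k - Ahat ^ k‖ * s ^ k
        + σu ^ 2 * τ ^ 2 * (2 * ‖B‖ + ε) * ε * ∑ k ∈ Finset.range (t + 1), (s ^ 2) ^ k := by
        rw [Finset.sum_add_distrib, Finset.mul_sum, Finset.mul_sum]
    _ ≤ 2 * τ * (σw ^ 2 + σu ^ 2 * ‖B‖ ^ 2) * (ε * τ ^ 2 * (1 / (1 - s ^ 2) ^ 2))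
        + σu ^ 2 * τ ^ 2 * (2 * ‖B‖ + ε) * ε * (1 / (1 - s ^ 2)) :=
        add_le_add (mul_le_mul_of_nonneg_left hDsum hC1)
          (mul_le_mul_of_nonneg_left hG1 hC2)
    _ ≤ 2 * τ * (σw ^ 2 + σu ^ 2 * ‖B‖ ^ 2) * (ε * τ ^ 2 * (4 / (1 - ρ ^ 2) ^ 2))
        + σu ^ 2 * τ ^ 2 * (2 * ‖B‖ + ε) * ε * (2 / (1 - ρ ^ 2)) :=
        add_le_add
          (mul_le_mul_of_nonneg_left
            (mul_le_mul_of_nonneg_left hX1 (by positivity)) hC1)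
          (mul_le_mul_of_nonneg_left hX2 hC2)
    _ = (8 * (σw ^ 2 + σu ^ 2 * ‖B‖ ^ 2) * τ ^ 3 / (1 - ρ ^ 2) ^ 2
          + 4 * σu ^ 2 * ‖B‖ * τ ^ 2 / (1 - ρ ^ 2)) * ε
        + 2 * σu ^ 2 * τ ^ 2 * ε ^ 2 / (1 - ρ ^ 2) := by
        field_simp
        ring
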